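/- arXiv:1009.4510 — 3 statements merged into one kernel-verified Lean document; each statement's English description precedes it below -/
import Mathlib

section
/- Let P be a graded poset with a triple assignment τ. Then for every subset S of {1,...,n-1}, the flag h-vector entry h_S equals the number of maximal chains 0̂ = x_0 ⋖ x_1 ⋖ ... ⋖ x_n = 1̂ whose descent set {i ∈ {1,...,n-1} : τ(x_{i-1}, x_i, x_{i+1}) = b} equals S. -/
open Finset

section ChainDefs
variable {α : Type*} [PartialOrder α]

/-- `l` is a saturated (maximal) chain from `x` to `y`, given as a list. -/
def SatChain (x y : α) (l : List α) : Prop :=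
  l.Chain' (· ⋖ ·) ∧ l.head? = some x ∧ l.getLast? = some y

/-- A chain is rising for `τ` (where `true` codes the letter 𝐚 and `false` codes 𝐛)
if every consecutive triple is mapped to 𝐚. -/
def RisingOn (τ : α → α → α → Bool) (l : List α) : Prop :=
  ∀ (i : ℕ) (h : i + 2 < l.length),
    τ (l.get ⟨i, by omega⟩) (l.get ⟨i + 1, by omega⟩) (l.get ⟨i + 2, by omega⟩) = true

/-- A triple assignment: every non-trivial interval has a unique rising maximal chain. -/
def IsTripleAssignment (τ : α → α → α → Bool) : Prop :=
  ∀ x y : α, x < y → ∃! l : List α, SatChain x y l ∧ RisingOn τ l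

/-- An `R`-labeling with label set `Λ` and relation `sim`: every non-trivial interval
has a unique maximal chain whose successive labels are related by `sim`. -/
def IsRLabeling {Λ : Type*} (sim : Λ → Λ → Prop) (lab : α → α → Λ) : Prop :=
  ∀ x y : α, x < y → ∃! l : List α,
    SatChain x y l ∧ ∀ (i : ℕ) (h : i + 2 < l.length),
      sim (lab (l.get ⟨i, by omega⟩) (l.get ⟨i + 1, by omega⟩))
          (lab (l.get ⟨i + 1, by omega⟩) (l.get ⟨i + 2, by omega⟩))

/-- `y` is a breakpoint for `τ`: the value `τ x y z` does not depend on `x ⋖ y` and `y ⋖ z`. -/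
def IsBreakpoint (τ : α → α → α → Bool) (y : α) : Prop :=
  ∃ v : Bool, ∀ x z : α, x ⋖ y → y ⋖ z → τ x y z = v

end ChainDefs

section FlagDefs
variable {α : Type*} [PartialOrder α] [BoundedOrder α]

/-- `rk` is a rank function making the bounded poset graded. -/
def IsGraded (rk : α → ℕ) : Prop :=
  rk ⊥ = 0 ∧ ∀ x y : α, x ⋖ y → rk y = rk x + 1

/-- Flag `f`-vector entry: the number of chains `0̂ < x₁ < ⋯ < x_k < 1̂`
passing exactly through the ranks in `S`. -/
noncomputable def flagF (rk : α → ℕ) (S : Finset ℕ) : ℕ :=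
  Nat.card {c : Finset α // IsChain (· ≤ ·) (↑c : Set α) ∧ c.image rk = S ∧
    c.card = S.card ∧ ∀ x ∈ c, ⊥ < x ∧ x < ⊤}

/-- Flag `h`-vector entry: `h_S = ∑_{T ⊆ S} (-1)^{|S∖T|} f_T`. -/
noncomputable def flagH (rk : α → ℕ) (S : Finset ℕ) : ℤ :=
  ∑ T ∈ S.powerset, (-1) ^ (S.card - T.card) * (flagF rk T : ℤ)

/-- The descent set of a maximal chain `0̂ = x₀ ⋖ x₁ ⋖ ⋯ ⋖ x_n = 1̂` with respect to `τ`: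
those `i` with `τ (x_{i-1}) (x_i) (x_{i+1}) = 𝐛`. -/
def descSet (τ : α → α → α → Bool) (l : List α) : Finset ℕ :=
  (Finset.Icc 1 (l.length - 2)).filter
    (fun i => τ (l.getD (i - 1) ⊥) (l.getD i ⊥) (l.getD (i + 1) ⊥) = false)

end FlagDefs

/-- The butterfly poset `T_n`: one element at ranks `0` and `n` and two elements
(`side = true/false`) at each rank `1 ≤ i ≤ n-1`; any two elements of distinct
ranks are comparable. -/
structure Butt (n : ℕ) where
  rk : ℕ
  side : Bool
  hle : rk ≤ n
  hb : rk = 0 ∨ rk = n → side = false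

theorem Butt.ext' {n : ℕ} {x y : Butt n} (h1 : x.rk = y.rk) (h2 : x.side = y.side) :
    x = y := by
  cases x; cases y; simp_all

instance {n : ℕ} : PartialOrder (Butt n) where
  le x y := x = y ∨ x.rk < y.rk
  le_refl x := Or.inl rfl
  le_trans x y z hxy hyz := by
    rcases hxy with rfl | h
    · exact hyz
    · rcases hyz with rfl | h'
      · exact Or.inr h
      · exact Or.inr (h.trans h')
  le_antisymm x y hxy hyx := by
    rcases hxy with rfl | h
    · rfl
    · rcases hyx with rfl | h'
      · rfl
      · omega

instance {n : ℕ} : BoundedOrder (Butt n) where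
  bot := ⟨0, false, Nat.zero_le n, fun _ => rfl⟩
  top := ⟨n, false, le_refl n, fun _ => rfl⟩
  bot_le x := by
    by_cases h : x.rk = 0
    · exact Or.inl (Butt.ext' h.symm (x.hb (Or.inl h)).symm)
    · exact Or.inr (by simpa using Nat.pos_of_ne_zero h)
  le_top x := by
    by_cases h : x.rk = n
    · exact Or.inl (Butt.ext' h (x.hb (Or.inr h)))
    · exact Or.inr (lt_of_le_of_ne x.hle h)

/-- The poset `P_n`: two copies (`copy = true/false`) of the butterfly poset `T_n`
glued along their minimum and maximum elements. -/
structure Glue (n : ℕ) where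
  rk : ℕ
  side : Bool
  copy : Bool
  hle : rk ≤ n
  hb : rk = 0 ∨ rk = n → side = false ∧ copy = false

theorem Glue.ext' {n : ℕ} {x y : Glue n} (h1 : x.rk = y.rk) (h2 : x.side = y.side)
    (h3 : x.copy = y.copy) : x = y := by
  cases x; cases y; simp_all

instance {n : ℕ} : PartialOrder (Glue n) where
  le x y := x = y ∨ (x.rk < y.rk ∧ (x.copy = y.copy ∨ x.rk = 0 ∨ y.rk = n))
  le_refl x := Or.inl rfl
  le_trans x y z hxy hyz := by
    rcases hxy with rfl | ⟨h1, h2⟩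
    · exact hyz
    · rcases hyz with rfl | ⟨h3, h4⟩
      · exact Or.inr ⟨h1, h2⟩
      · refine Or.inr ⟨h1.trans h3, ?_⟩
        rcases h2 with hc | h0 | hn
        · rcases h4 with hc' | h0' | hn'
          · exact Or.inl (hc.trans hc')
          · omega
          · exact Or.inr (Or.inr hn')
        · exact Or.inr (Or.inl h0)
        · have := z.hle; omega
  le_antisymm x y hxy hyx := by
    rcases hxy with rfl | ⟨h1, _⟩
    · rfl
    · rcases hyx with rfl | ⟨h2, _⟩
      · rfl
      · omega

instance {n : ℕ} : BoundedOrder (Glue n) where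
  bot := ⟨0, false, false, Nat.zero_le n, fun _ => ⟨rfl, rfl⟩⟩
  top := ⟨n, false, false, le_refl n, fun _ => ⟨rfl, rfl⟩⟩
  bot_le x := by
    by_cases h : x.rk = 0
    · exact Or.inl (Glue.ext' h.symm (x.hb (Or.inl h)).1.symm (x.hb (Or.inl h)).2.symm)
    · exact Or.inr ⟨by simpa using Nat.pos_of_ne_zero h, Or.inr (Or.inl rfl)⟩
  le_top x := by
    by_cases h : x.rk = n
    · exact Or.inl (Glue.ext' h (x.hb (Or.inr h)).1 (x.hb (Or.inr h)).2)
    · exact Or.inr ⟨lt_of_le_of_ne x.hle h, Or.inr (Or.inr rfl)⟩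

/-- Eulerian condition (counting form): every non-trivial interval has as many
elements of even rank as of odd rank. -/
def EulerianCount {α : Type*} [PartialOrder α] (rk : α → ℕ) : Prop :=
  ∀ x y : α, x < y →
    Nat.card {z : α // z ∈ Set.Icc x y ∧ Even (rk z - rk x)} =
    Nat.card {z : α // z ∈ Set.Icc x y ∧ ¬ Even (rk z - rk x)}

section AbIndex

/-- The variable 𝐚 of the non-commutative polynomial ring `ℤ⟨𝐚,𝐛⟩`,
realized as the monoid algebra of the free monoid on two letters. -/
noncomputable def abA : MonoidAlgebra ℤ (FreeMonoid Bool) :=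
  MonoidAlgebra.single (FreeMonoid.ofList [true]) 1

/-- The variable 𝐛. -/
noncomputable def abB : MonoidAlgebra ℤ (FreeMonoid Bool) :=
  MonoidAlgebra.single (FreeMonoid.ofList [false]) 1

/-- The 𝐚𝐛-monomial `u_S` of length `n-1`, with 𝐛 in the positions of `S`. -/
def abMonomial (n : ℕ) (S : Finset ℕ) : FreeMonoid Bool :=
  FreeMonoid.ofList ((List.range (n - 1)).map (fun j => decide ((j + 1) ∉ S)))

/-- The 𝐚𝐛-index `Ψ(P) = ∑_S h_S u_S` of a bounded poset of rank `n`
with rank function `rk`. -/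
noncomputable def abIndex {α : Type*} [PartialOrder α] [BoundedOrder α]
    (rk : α → ℕ) (n : ℕ) : MonoidAlgebra ℤ (FreeMonoid Bool) :=
  ∑ S ∈ (Finset.Icc 1 (n - 1)).powerset,
    MonoidAlgebra.single (abMonomial n S) (flagH rk S)

/-- The weight `wt(c)` of a maximal chain, as an 𝐚𝐛-monomial. -/
def chainWeight {α : Type*} [PartialOrder α] [OrderBot α]
    (τ : α → α → α → Bool) (l : List α) : FreeMonoid Bool :=
  FreeMonoid.ofList ((List.range (l.length - 2)).map
    (fun i => τ (l.getD i ⊥) (l.getD (i + 1) ⊥) (l.getD (i + 2) ⊥)))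

end AbIndex

namespace TA6

variable {α : Type*} [PartialOrder α]

theorem sat_ne_nil {x y : α} {l : List α} (h : SatChain x y l) : l ≠ [] := by
  rintro rfl; simp [SatChain] at h

theorem sat_len_pos {x y : α} {l : List α} (h : SatChain x y l) : 0 < l.length :=
  List.length_pos_iff.mpr (sat_ne_nil h)

theorem sat_getD_zero {x y : α} {l : List α} (h : SatChain x y l) (d : α) : l.getD 0 d = x := by
  have hne := sat_ne_nil h
  have h2 := h.2.1
  rw [List.head?_eq_head hne, Option.some_inj] at h2
  rw [List.getD_eq_getElem l d (List.length_pos_iff.mpr hne), ← List.head_eq_getElem hne, h2]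

theorem sat_getD_last {x y : α} {l : List α} (h : SatChain x y l) (d : α) :
    l.getD (l.length - 1) d = y := by
  have hne := sat_ne_nil h
  have hpos := sat_len_pos h
  have h2 := h.2.2
  rw [List.getLast?_eq_getLast hne, Option.some_inj] at h2
  rw [List.getD_eq_getElem l d (by omega), ← List.getLast_eq_getElem hne, h2]

theorem sat_step {x y : α} {l : List α} (h : SatChain x y l) (d : α) {i : ℕ}
    (hi : i + 1 < l.length) : l.getD i d ⋖ l.getD (i + 1) d := by
  rw [List.getD_eq_getElem l d (by omega), List.getD_eq_getElem l d hi]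
  have := List.isChain_iff_getElem.mp h.1 i (by omega)
  simpa [List.get_eq_getElem] using this

theorem sat_pairwise {x y : α} {l : List α} (h : SatChain x y l) : l.Pairwise (· < ·) := by
  have : l.Chain' (· < ·) := List.IsChain.imp (fun ⦃a b⦄ hab => hab.lt) h.1
  exact List.isChain_iff_pairwise.mp this

theorem sat_lt {x y : α} {l : List α} (h : SatChain x y l) (d : α) {i j : ℕ} (hij : i < j)
    (hj : j < l.length) : l.getD i d < l.getD j d := by
  rw [List.getD_eq_getElem l d (by omega), List.getD_eq_getElem l d hj]
  have := List.pairwise_iff_get.mp (sat_pairwise h) ⟨i, by omega⟩ ⟨j, hj⟩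
    (by exact Fin.mk_lt_mk.mpr hij)
  simpa [List.get_eq_getElem] using this

theorem sat_le {x y : α} {l : List α} (h : SatChain x y l) (d : α) {i j : ℕ} (hij : i ≤ j)
    (hj : j < l.length) : l.getD i d ≤ l.getD j d := by
  rcases eq_or_lt_of_le hij with rfl | hij
  · exact le_refl _
  · exact (sat_lt h d hij hj).le

theorem sat_rank {rk : α → ℕ} (hrk : ∀ a b : α, a ⋖ b → rk b = rk a + 1)
    {x y : α} {l : List α} (h : SatChain x y l) (d : α) :
    ∀ i, i < l.length → rk (l.getD i d) = rk x + i := by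
  intro i
  induction i with
  | zero => intro hi; rw [sat_getD_zero h d]; omega
  | succ k ih =>
    intro hi
    rw [hrk _ _ (sat_step h d hi), ih (by omega)]; omega

theorem sat_length {rk : α → ℕ} (hrk : ∀ a b : α, a ⋖ b → rk b = rk a + 1)
    {x y : α} {l : List α} (h : SatChain x y l) : rk x + l.length = rk y + 1 := by
  have hpos := sat_len_pos h
  have := sat_rank hrk h x (l.length - 1) (by omega)
  rw [sat_getD_last h x] at this
  omega

theorem sat_mem {x y : α} {l : List α} (_ : SatChain x y l) (d : α) {z : α} (hz : z ∈ l) :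
    ∃ i, i < l.length ∧ l.getD i d = z := by
  obtain ⟨i, hi, rfl⟩ := List.mem_iff_getElem.mp hz
  exact ⟨i, hi, List.getD_eq_getElem l d hi⟩

theorem sat_getD_mem {x y : α} {l : List α} (_ : SatChain x y l) (d : α) {i : ℕ}
    (hi : i < l.length) : l.getD i d ∈ l := by
  rw [List.getD_eq_getElem l d hi]; exact List.getElem_mem hi

theorem sat_le_endpoints {x y : α} {l : List α} (h : SatChain x y l) : x ≤ y := by
  have hpos := sat_len_pos h
  have := sat_le h x (Nat.zero_le (l.length - 1)) (by omega)
  rwa [sat_getD_zero h x, sat_getD_last h x] at this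

theorem sat_single {x : α} {l : List α} (h : SatChain x x l) : l = [x] := by
  have hpos := sat_len_pos h
  have hlen : l.length = 1 := by
    by_contra hne
    have h2 : 0 < l.length - 1 := by omega
    have := sat_lt h x h2 (by omega)
    rw [sat_getD_zero h x, sat_getD_last h x] at this
    exact lt_irrefl x this
  obtain ⟨a, rfl⟩ := List.length_eq_one_iff.mp hlen
  have := sat_getD_zero h x
  simp at this
  rw [this]

theorem sat_mem_le {x y : α} {l : List α} (h : SatChain x y l) {z : α} (hz : z ∈ l) :
    x ≤ z ∧ z ≤ y := by
  obtain ⟨i, hi, rfl⟩ := sat_mem h x hz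
  constructor
  · have := sat_le h x (Nat.zero_le i) hi
    rwa [sat_getD_zero h x] at this
  · have := sat_le h x (show i ≤ l.length - 1 by omega) (by have := sat_len_pos h; omega)
    rwa [sat_getD_last h x] at this

theorem sat_cons {z y : α} {B : List α} (h : SatChain z y B) : ∃ t, B = z :: t := by
  cases B with
  | nil => exact absurd rfl (sat_ne_nil h)
  | cons a t =>
    have : a = z := by simpa using h.2.1
    exact ⟨t, by rw [this]⟩

theorem sat_of_getD {x y : α} {l : List α} (d : α) (hne : l ≠ []) (hc : l.Chain' (· ⋖ ·))
    (h0 : l.getD 0 d = x) (h1 : l.getD (l.length - 1) d = y) : SatChain x y l := by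
  have hpos : 0 < l.length := List.length_pos_iff.mpr hne
  refine ⟨hc, ?_, ?_⟩
  · rw [List.head?_eq_head hne, Option.some_inj, List.head_eq_getElem hne,
      ← List.getD_eq_getElem l d hpos, h0]
  · rw [List.getLast?_eq_getLast hne, Option.some_inj, List.getLast_eq_getElem hne,
      ← List.getD_eq_getElem l d (by omega), h1]

theorem sat_append {x z y : α} {l₁ l₂ : List α} (h₁ : SatChain x z l₁) (h₂ : SatChain z y l₂) :
    SatChain x y (l₁ ++ l₂.tail) := by
  obtain ⟨t, rfl⟩ := sat_cons h₂
  simp only [List.tail_cons]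
  refine ⟨?_, ?_, ?_⟩
  · refine List.IsChain.append h₁.1 (h₂.1.tail) ?_
    intro a ha b hb
    simp only [Option.mem_def, h₁.2.2, Option.some_inj] at ha
    cases t with
    | nil => simp at hb
    | cons c t' =>
      simp only [List.head?_cons, Option.mem_def, Option.some_inj] at hb
      have := (List.isChain_cons_cons.mp h₂.1).1
      rw [← ha, ← hb]
      exact this
  · obtain ⟨t₁, rfl⟩ := sat_cons h₁
    simpa using h₁.2.1
  · cases t with
    | nil =>
      have : z = y := by simpa using h₂.2.2
      rw [List.append_nil, ← this]
      exact h₁.2.2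
    | cons c t' =>
      have := h₂.2.2
      rw [List.getLast?_cons_cons] at this
      rw [List.getLast?_append, this]
      rfl

end TA6

namespace TA6

variable {α : Type*} [PartialOrder α]

theorem getD_take {l : List α} {n p : ℕ} (hp : p < n) (d : α) :
    (l.take n).getD p d = l.getD p d := by
  by_cases hpl : p < l.length
  · rw [List.getD_eq_getElem _ d (by simp; omega), List.getD_eq_getElem _ d hpl]
    exact (List.getElem_take' hpl hp).symm
  · rw [List.getD_eq_default _ d (by simp; omega), List.getD_eq_default _ d (by omega)]

theorem getD_drop {l : List α} {n p : ℕ} (hp : n + p < l.length) (d : α) :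
    (l.drop n).getD p d = l.getD (n + p) d := by
  rw [List.getD_eq_getElem _ d (by simp; omega), List.getD_eq_getElem _ d hp]
  exact List.getElem_drop

theorem getD_append_left {l t : List α} {p : ℕ} (hp : p < l.length) (d : α) :
    (l ++ t).getD p d = l.getD p d := List.getD_append l t d p hp

theorem sat_take {x y : α} {l : List α} (h : SatChain x y l) (d : α) {j : ℕ}
    (hj : j < l.length) : SatChain x (l.getD j d) (l.take (j + 1)) := by
  have hlen : (l.take (j + 1)).length = j + 1 := by simp; omega
  refine sat_of_getD d (by rw [← List.length_pos_iff, hlen]; omega) (h.1.take _) ?_ ?_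
  · rw [getD_take (by omega) d, sat_getD_zero h d]
  · rw [hlen]
    simp only [Nat.add_sub_cancel]
    exact getD_take (by omega) d

theorem sat_drop {x y : α} {l : List α} (h : SatChain x y l) (d : α) {j : ℕ}
    (hj : j < l.length) : SatChain (l.getD j d) y (l.drop j) := by
  have hlen : (l.drop j).length = l.length - j := by simp
  refine sat_of_getD d (by rw [← List.length_pos_iff, hlen]; omega) (h.1.drop _) ?_ ?_
  · rw [getD_drop (by omega) d]; rw [Nat.add_zero]
  · rw [hlen, getD_drop (by omega) d]
    have e : j + (l.length - j - 1) = l.length - 1 := by omega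
    rw [e, sat_getD_last h d]

theorem sat_split {x y : α} {l : List α} (_ : SatChain x y l) {j : ℕ} :
    l = l.take (j + 1) ++ (l.drop j).tail := by
  rw [List.tail_drop, List.take_append_drop]

theorem sat_append_getD {x z y : α} {l₁ l₂ : List α} (h₁ : SatChain x z l₁)
    (h₂ : SatChain z y l₂) (d : α) {p : ℕ} (hp : l₁.length - 1 ≤ p) :
    (l₁ ++ l₂.tail).getD p d = l₂.getD (p - (l₁.length - 1)) d := by
  have hpos₁ := sat_len_pos h₁
  rcases Nat.lt_or_ge p l₁.length with hpl | hpl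
  · have hpe : p = l₁.length - 1 := by omega
    rw [getD_append_left hpl d, hpe, sat_getD_last h₁ d, Nat.sub_self]
    rw [(sat_getD_zero h₂ d).symm]
  · obtain ⟨t, rfl⟩ := sat_cons h₂
    rw [List.getD_append_right _ _ d p hpl, List.tail_cons]
    have e : p - (l₁.length - 1) = (p - l₁.length) + 1 := by omega
    rw [e, List.getD_cons_succ]

theorem risingOn_iff {τ : α → α → α → Bool} {l : List α} (d : α) :
    RisingOn τ l ↔ ∀ p, p + 2 < l.length →
      τ (l.getD p d) (l.getD (p + 1) d) (l.getD (p + 2) d) = true := by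
  constructor
  · intro H p hp
    rw [List.getD_eq_getElem l d (by omega), List.getD_eq_getElem l d (by omega),
      List.getD_eq_getElem l d hp]
    have := H p hp
    simpa [List.get_eq_getElem] using this
  · intro H p hp
    have := H p hp
    rw [List.getD_eq_getElem l d (by omega), List.getD_eq_getElem l d (by omega),
      List.getD_eq_getElem l d hp] at this
    simpa [List.get_eq_getElem] using this

end TA6

namespace TA6

variable {α : Type*} [PartialOrder α]

open Classical in
noncomputable def rho {τ : α → α → α → Bool} (hτ : IsTripleAssignment τ) (x y : α) : List α :=
  if h : x < y then (hτ x y h).exists.choose else [x]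

theorem rho_sat {τ : α → α → α → Bool} (hτ : IsTripleAssignment τ) {x y : α} (hxy : x ≤ y) :
    SatChain x y (rho hτ x y) ∧ RisingOn τ (rho hτ x y) := by
  rcases eq_or_lt_of_le hxy with rfl | h
  · rw [rho]; rw [dif_neg (lt_irrefl x)]
    refine ⟨⟨List.IsChain.singleton x, rfl, rfl⟩, ?_⟩
    intro i hi
    simp at hi
  · rw [rho]; rw [dif_pos h]
    exact (hτ x y h).exists.choose_spec

theorem rho_unique {τ : α → α → α → Bool} (hτ : IsTripleAssignment τ) {x y : α} {l : List α}
    (hl : SatChain x y l) (hr : RisingOn τ l) : l = rho hτ x y := by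
  rcases eq_or_lt_of_le (sat_le_endpoints hl) with rfl | h
  · rw [rho]; rw [dif_neg (lt_irrefl x)]
    exact sat_single hl
  · rw [rho]; rw [dif_pos h]
    obtain ⟨l₀, hl₀, hu⟩ := hτ x y h
    exact (hu l ⟨hl, hr⟩).trans (hu _ (hτ x y h).exists.choose_spec).symm

noncomputable def build {τ : α → α → α → Bool} (hτ : IsTripleAssignment τ) (y : α) :
    α → List α → List α
  | x, [] => rho hτ x y
  | x, z :: zs => rho hτ x z ++ (build hτ y z zs).tail

theorem build_sat {τ : α → α → α → Bool} (hτ : IsTripleAssignment τ) (y : α) :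
    ∀ (zs : List α) (x : α), (x :: zs).Chain' (· < ·) → (∀ w ∈ x :: zs, w ≤ y) →
      SatChain x y (build hτ y x zs) := by
  intro zs
  induction zs with
  | nil =>
    intro x _ hle
    exact (rho_sat hτ (hle x (by simp))).1
  | cons z zs ih =>
    intro x hch hle
    obtain ⟨hxz, hch'⟩ := List.isChain_cons_cons.mp hch
    have h1 : SatChain x z (rho hτ x z) := (rho_sat hτ hxz.le).1
    have h2 : SatChain z y (build hτ y z zs) :=
      ih z hch' (fun w hw => hle w (List.mem_cons_of_mem x hw))
    exact sat_append h1 h2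

theorem build_mem {τ : α → α → α → Bool} (hτ : IsTripleAssignment τ) (y : α) :
    ∀ (zs : List α) (x : α), (x :: zs).Chain' (· < ·) → (∀ w ∈ x :: zs, w ≤ y) →
      ∀ w ∈ zs, w ∈ build hτ y x zs := by
  intro zs
  induction zs with
  | nil => intro x _ _ w hw; simp at hw
  | cons z zs ih =>
    intro x hch hle w hw
    obtain ⟨hxz, hch'⟩ := List.isChain_cons_cons.mp hch
    have h1 : SatChain x z (rho hτ x z) := (rho_sat hτ hxz.le).1
    have hB : SatChain z y (build hτ y z zs) :=
      build_sat hτ y zs z hch' (fun w hw => hle w (List.mem_cons_of_mem x hw))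
    have hzr : z ∈ rho hτ x z := by
      have he := sat_getD_last h1 x
      have hmem0 : (rho hτ x z).getD ((rho hτ x z).length - 1) x ∈ rho hτ x z := by
        refine sat_getD_mem h1 x ?_
        have := sat_len_pos h1
        omega
      rwa [he] at hmem0
    show w ∈ rho hτ x z ++ (build hτ y z zs).tail
    rcases List.mem_cons.mp hw with rfl | hw'
    · exact List.mem_append_left _ hzr
    · have hwB : w ∈ build hτ y z zs :=
        ih z hch' (fun v hv => hle v (List.mem_cons_of_mem x hv)) w hw'
      obtain ⟨t, ht⟩ := sat_cons hB
      rw [ht] at hwB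
      rcases List.mem_cons.mp hwB with rfl | hwt
      · exact List.mem_append_left _ hzr
      · refine List.mem_append_right _ ?_
        rw [ht, List.tail_cons]
        exact hwt

theorem build_rising {τ : α → α → α → Bool} (hτ : IsTripleAssignment τ) (y d : α) :
    ∀ (zs : List α) (x : α), (x :: zs).Chain' (· < ·) → (∀ w ∈ x :: zs, w ≤ y) →
      ∀ p, p + 2 < (build hτ y x zs).length → (build hτ y x zs).getD (p + 1) d ∉ zs →
        τ ((build hτ y x zs).getD p d) ((build hτ y x zs).getD (p + 1) d)
          ((build hτ y x zs).getD (p + 2) d) = true := by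
  intro zs
  induction zs with
  | nil =>
    intro x _ hle p hp _
    exact (risingOn_iff d).mp (rho_sat hτ (hle x (by simp))).2 p hp
  | cons z zs ih =>
    intro x hch hle p hp hmid
    obtain ⟨hxz, hch'⟩ := List.isChain_cons_cons.mp hch
    have hle' : ∀ w ∈ z :: zs, w ≤ y := fun w hw => hle w (List.mem_cons_of_mem x hw)
    have h1 : SatChain x z (rho hτ x z) := (rho_sat hτ hxz.le).1
    have hB : SatChain z y (build hτ y z zs) := build_sat hτ y zs z hch' hle'
    set r := rho hτ x z with hr
    set B := build hτ y z zs with hBdef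
    have hwhole : build hτ y x (z :: zs) = r ++ B.tail := rfl
    have hL2 : 2 ≤ r.length := by
      by_contra hc
      have hpos := sat_len_pos h1
      have hlen1 : r.length = 1 := by omega
      have e0 := sat_getD_zero h1 d
      have e1 := sat_getD_last h1 d
      rw [hlen1] at e1
      simp only [Nat.sub_self] at e1
      rw [e0] at e1
      exact absurd e1 (ne_of_lt hxz)
    have hBpos := sat_len_pos hB
    have hlen : (r ++ B.tail).length = r.length + (B.length - 1) := by
      rw [List.length_append, List.length_tail]
    rw [hwhole] at hp hmid ⊢
    rw [hlen] at hp
    rcases Nat.lt_or_ge (p + 2) r.length with hc1 | hc1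
    · rw [getD_append_left (show p + 1 < r.length by omega) d] at hmid
      rw [getD_append_left (show p < r.length by omega) d,
        getD_append_left (show p + 1 < r.length by omega) d,
        getD_append_left hc1 d]
      exact (risingOn_iff d).mp (rho_sat hτ hxz.le).2 p hc1
    · rcases Nat.lt_or_ge (p + 1) r.length with hc2 | hc2
      · -- p + 1 = r.length - 1, middle is z
        have he : p + 1 = r.length - 1 := by omega
        rw [getD_append_left hc2 d, he, sat_getD_last h1 d] at hmid
        exact absurd (List.mem_cons_self (a := z) (l := zs)) hmid
      · -- p ≥ r.length - 1
        have hge : r.length - 1 ≤ p := by omega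
        rw [sat_append_getD h1 hB d (show r.length - 1 ≤ p + 1 by omega)] at hmid
        rw [sat_append_getD h1 hB d hge,
          sat_append_getD h1 hB d (show r.length - 1 ≤ p + 1 by omega),
          sat_append_getD h1 hB d (show r.length - 1 ≤ p + 2 by omega)]
        have e1 : p + 1 - (r.length - 1) = (p - (r.length - 1)) + 1 := by omega
        have e2 : p + 2 - (r.length - 1) = (p - (r.length - 1)) + 2 := by omega
        rw [e1] at hmid
        rw [e1, e2]
        refine ih z hch' hle' _ ?_ ?_
        · rw [← hBdef]; omega
        · intro hcon
          exact hmid (List.mem_cons_of_mem z hcon)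

theorem build_unique {τ : α → α → α → Bool} (hτ : IsTripleAssignment τ) (y d : α) :
    ∀ (zs : List α) (x : α) (l : List α), (x :: zs).Chain' (· < ·) →
      SatChain x y l → (∀ w ∈ zs, w ∈ l) →
      (∀ p, p + 2 < l.length → l.getD (p + 1) d ∉ zs →
        τ (l.getD p d) (l.getD (p + 1) d) (l.getD (p + 2) d) = true) →
      l = build hτ y x zs := by
  intro zs
  induction zs with
  | nil =>
    intro x l _ hl _ hrise
    exact rho_unique hτ hl ((risingOn_iff d).mpr (fun p hp => hrise p hp (by simp)))
  | cons z zs ih =>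
    intro x l hch hl hmem hrise
    obtain ⟨hxz, hch'⟩ := List.isChain_cons_cons.mp hch
    have hpw : (x :: z :: zs).Pairwise (· < ·) := List.isChain_iff_pairwise.mp hch
    have hzzs : ∀ w ∈ zs, z < w := fun w hw => ((List.pairwise_cons.mp
      (List.pairwise_cons.mp hpw).2).1) w hw
    have hzl : z ∈ l := hmem z (List.mem_cons_self (a := z) (l := zs))
    obtain ⟨j, hj, hzj⟩ := sat_mem hl d hzl
    -- positions of elements of z :: zs are ≥ j
    have hpos : ∀ w ∈ zs, ∀ k, k < l.length → l.getD k d = w → j < k := by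
      intro w hw k hk hkw
      by_contra hc
      have hkj : k ≤ j := by omega
      have : l.getD k d ≤ l.getD j d := sat_le hl d hkj hj
      rw [hkw, hzj] at this
      exact lt_irrefl z ((hzzs w hw).trans_le this)
    have h1 : SatChain x z (l.take (j + 1)) := hzj ▸ sat_take hl d hj
    have h2 : SatChain z y (l.drop j) := hzj ▸ sat_drop hl d hj
    -- first part is rising
    have hl1 : l.take (j + 1) = rho hτ x z := by
      refine rho_unique hτ h1 ((risingOn_iff d).mpr ?_)
      intro p hp
      have hlen1 : (l.take (j + 1)).length = j + 1 := by simp; omega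
      rw [hlen1] at hp
      rw [getD_take (by omega) d, getD_take (by omega) d, getD_take (by omega) d]
      refine hrise p (by omega) ?_
      intro hcon
      rcases List.mem_cons.mp hcon with he | hzs
      · have : l.getD (p + 1) d < l.getD j d := sat_lt hl d (by omega) hj
        rw [he, hzj] at this
        exact lt_irrefl z this
      · have := hpos _ hzs (p + 1) (by omega) rfl
        omega
    have hl2 : l.drop j = build hτ y z zs := by
      refine ih z (l.drop j) hch' h2 ?_ ?_
      · intro w hw
        obtain ⟨k, hk, hkw⟩ := sat_mem hl d (hmem w (List.mem_cons_of_mem z hw))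
        have hjk : j < k := hpos w hw k hk hkw
        have : (l.drop j).getD (k - j) d = w := by
          rw [getD_drop (by omega) d]
          have e : j + (k - j) = k := by omega
          rw [e, hkw]
        rw [← this]
        exact sat_getD_mem h2 d (by simp; omega)
      · intro p hp hmid
        have hlend : (l.drop j).length = l.length - j := by simp
        rw [hlend] at hp
        rw [getD_drop (show j + (p+1) < l.length by omega) d] at hmid
        rw [getD_drop (show j + p < l.length by omega) d,
          getD_drop (show j + (p+1) < l.length by omega) d,
          getD_drop (show j + (p+2) < l.length by omega) d]
        have e0 : j + p = (j + p) := rfl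
        have e1 : j + (p + 1) = (j + p) + 1 := by omega
        have e2 : j + (p + 2) = (j + p) + 2 := by omega
        rw [e1] at hmid ⊢
        rw [e2]
        refine hrise (j + p) (by omega) ?_
        intro hcon
        rcases List.mem_cons.mp hcon with he | hzs
        · have : l.getD j d < l.getD ((j+p) + 1) d := sat_lt hl d (by omega) (by omega)
          rw [he, hzj] at this
          exact lt_irrefl z this
        · exact hmid hzs
    have := sat_split hl (j := j)
    rw [hl1, hl2] at this
    exact this

end TA6

namespace TA6

variable {α : Type*} [PartialOrder α]

theorem descSet_subset_iff [BoundedOrder α] {τ : α → α → α → Bool} {l : List α} {T : Finset ℕ} :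
    descSet τ l ⊆ T ↔ ∀ p, p + 2 < l.length → (p + 1) ∉ T →
      τ (l.getD p ⊥) (l.getD (p + 1) ⊥) (l.getD (p + 2) ⊥) = true := by
  unfold descSet
  constructor
  · intro H p hp hpT
    by_contra hf
    have hf' : τ (l.getD p ⊥) (l.getD (p + 1) ⊥) (l.getD (p + 2) ⊥) = false :=
      Bool.not_eq_true _ ▸ hf
    refine hpT (H (Finset.mem_filter.mpr ⟨Finset.mem_Icc.mpr (by omega), ?_⟩))
    simpa using hf'
  · intro H i hi
    rw [Finset.mem_filter, Finset.mem_Icc] at hi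
    obtain ⟨⟨h1, h2⟩, h3⟩ := hi
    obtain ⟨p, rfl⟩ : ∃ p, i = p + 1 := ⟨i - 1, by omega⟩
    by_contra hiT
    have := H p (by omega) hiT
    simp only [Nat.add_sub_cancel] at h3
    rw [this] at h3
    simp at h3

theorem pairwise_eq_of_mem : ∀ (l₁ l₂ : List α), l₁.Pairwise (· < ·) → l₂.Pairwise (· < ·) →
    (∀ a, a ∈ l₁ ↔ a ∈ l₂) → l₁ = l₂ := by
  intro l₁
  induction l₁ with
  | nil =>
    intro l₂ _ _ hm
    exact (List.eq_nil_iff_forall_not_mem.mpr (fun a ha => by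
      rw [← hm a] at ha; simp at ha)).symm
  | cons a t₁ ih =>
    intro l₂ h₁ h₂ hm
    have ha2 : a ∈ l₂ := (hm a).mp (List.mem_cons_self (a := a) (l := t₁))
    cases l₂ with
    | nil => simp at ha2
    | cons b t₂ =>
      obtain ⟨hat₁, ht₁⟩ := List.pairwise_cons.mp h₁
      obtain ⟨hbt₂, ht₂⟩ := List.pairwise_cons.mp h₂
      have hb1 : b ∈ a :: t₁ := (hm b).mpr (List.mem_cons_self (a := b) (l := t₂))
      have hab : a = b := by
        rcases List.mem_cons.mp ha2 with h | h
        · exact h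
        · rcases List.mem_cons.mp hb1 with h' | h'
          · exact h'.symm
          · exact absurd ((hat₁ b h').trans (hbt₂ a h)) (lt_irrefl a)
      subst hab
      have : t₁ = t₂ := by
        refine ih t₂ ht₁ ht₂ (fun c => ⟨fun hc => ?_, fun hc => ?_⟩)
        · rcases List.mem_cons.mp ((hm c).mp (List.mem_cons_of_mem a hc)) with h | h
          · exact absurd (h ▸ hat₁ c hc) (lt_irrefl a)
          · exact h
        · rcases List.mem_cons.mp ((hm c).mpr (List.mem_cons_of_mem a hc)) with h | h
          · exact absurd (h ▸ hbt₂ c hc) (lt_irrefl a)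
          · exact h
      rw [this]

theorem exists_sorted_list :
    ∀ (c : Finset α), IsChain (· ≤ ·) (↑c : Set α) →
      ∃ zs : List α, zs.Pairwise (· < ·) ∧ ∀ a, a ∈ zs ↔ a ∈ c := by
  classical
  intro c
  induction c using Finset.strongInduction with
  | _ c ih =>
    intro hc
    rcases c.eq_empty_or_nonempty with rfl | hne
    · exact ⟨[], by simp, by simp⟩
    · obtain ⟨m, hm, hmin⟩ := c.exists_minimal hne
      have hsub : c.erase m ⊂ c := Finset.erase_ssubset hm
      have hc' : IsChain (· ≤ ·) (↑(c.erase m) : Set α) := by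
        refine hc.mono ?_
        intro w hw
        simp only [Finset.coe_erase, Set.mem_diff] at hw
        exact hw.1
      obtain ⟨zs, hzs, hmem⟩ := ih _ hsub hc'
      refine ⟨m :: zs, ?_, ?_⟩
      · rw [List.pairwise_cons]
        refine ⟨fun w hw => ?_, hzs⟩
        have hwc : w ∈ c.erase m := (hmem w).mp hw
        have hwm : w ≠ m := Finset.ne_of_mem_erase hwc
        have hwc' : w ∈ c := Finset.mem_of_mem_erase hwc
        rcases hc (Finset.mem_coe.mpr hm) (Finset.mem_coe.mpr hwc') (Ne.symm hwm) with h | h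
        · exact lt_of_le_of_ne h hwm.symm
        · exact absurd (le_antisymm h (hmin hwc' h)) hwm
      · intro a
        simp only [List.mem_cons, hmem, Finset.mem_erase]
        constructor
        · rintro (rfl | ⟨-, h⟩)
          · exact hm
          · exact h
        · intro ha
          by_cases h : a = m
          · exact Or.inl h
          · exact Or.inr ⟨h, ha⟩

theorem moebius_aux (V : Finset ℕ) :
    ∑ U ∈ V.powerset, (-1 : ℤ) ^ (V.card - U.card) = if V = ∅ then 1 else 0 := by
  have h : ∀ U ∈ V.powerset, (-1 : ℤ) ^ (V.card - U.card) = (-1) ^ V.card * (-1) ^ U.card := by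
    intro U hU
    have hle : U.card ≤ V.card := Finset.card_le_card (Finset.mem_powerset.mp hU)
    have h2 : ((-1 : ℤ) ^ U.card) * ((-1) ^ U.card) = 1 := by
      rw [← pow_add]
      exact Even.neg_one_pow ⟨U.card, rfl⟩
    calc (-1 : ℤ) ^ (V.card - U.card)
        = (-1) ^ (V.card - U.card) * (((-1 : ℤ) ^ U.card) * ((-1) ^ U.card)) := by rw [h2, mul_one]
      _ = ((-1) ^ (V.card - U.card) * (-1 : ℤ) ^ U.card) * ((-1) ^ U.card) := by ring
      _ = (-1 : ℤ) ^ ((V.card - U.card) + U.card) * ((-1) ^ U.card) := by rw [pow_add]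
      _ = (-1 : ℤ) ^ V.card * (-1) ^ U.card := by rw [Nat.sub_add_cancel hle]
  rw [Finset.sum_congr rfl h, ← Finset.mul_sum, Finset.sum_powerset_neg_one_pow_card]
  by_cases hV : V = ∅ <;> simp [hV]

theorem moebius (S R : Finset ℕ) :
    ∑ T ∈ S.powerset, (-1 : ℤ) ^ (S.card - T.card) * (if R ⊆ T then 1 else 0) =
      if R = S then 1 else 0 := by
  classical
  simp only [mul_ite, mul_one, mul_zero]
  rw [← Finset.sum_filter]
  by_cases hRS : R ⊆ S
  · have hstep : ∑ T ∈ S.powerset.filter (fun T => R ⊆ T), (-1 : ℤ) ^ (S.card - T.card) =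
        ∑ U ∈ (S \ R).powerset, (-1 : ℤ) ^ ((S \ R).card - U.card) := by
      refine Finset.sum_nbij' (fun T => T \ R) (fun U => U ∪ R) ?_ ?_ ?_ ?_ ?_
      · intro T hT
        rw [Finset.mem_filter, Finset.mem_powerset] at hT
        exact Finset.mem_powerset.mpr (Finset.sdiff_subset_sdiff hT.1 (Finset.Subset.refl R))
      · intro U hU
        rw [Finset.mem_powerset] at hU
        rw [Finset.mem_filter, Finset.mem_powerset]
        exact ⟨Finset.union_subset (hU.trans Finset.sdiff_subset) hRS, Finset.subset_union_right⟩
      · intro T hT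
        rw [Finset.mem_filter] at hT
        exact Finset.sdiff_union_of_subset hT.2
      · intro U hU
        rw [Finset.mem_powerset] at hU
        show (U ∪ R) \ R = U
        rw [Finset.union_sdiff_cancel_right]
        exact Finset.disjoint_of_subset_left hU Finset.sdiff_disjoint
      · intro T hT
        rw [Finset.mem_filter, Finset.mem_powerset] at hT
        have e1 : (S \ R).card = S.card - R.card := Finset.card_sdiff_of_subset hRS
        have e2 : (T \ R).card = T.card - R.card := Finset.card_sdiff_of_subset hT.2
        have e3 : R.card ≤ T.card := Finset.card_le_card hT.2
        have e4 : T.card ≤ S.card := Finset.card_le_card hT.1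
        show (-1 : ℤ) ^ (S.card - T.card) = (-1) ^ ((S \ R).card - (T \ R).card)
        congr 1
        omega
    rw [hstep, moebius_aux]
    have hiff : (S \ R = ∅) ↔ (R = S) := by
      rw [Finset.sdiff_eq_empty_iff_subset]
      exact ⟨fun h => Finset.Subset.antisymm hRS h, fun h => by rw [h]⟩
    exact if_congr hiff rfl rfl
  · have hempty : S.powerset.filter (fun T => R ⊆ T) = ∅ := by
      rw [Finset.filter_eq_empty_iff]
      intro T hT hsub
      exact hRS (hsub.trans (Finset.mem_powerset.mp hT))
    rw [hempty, Finset.sum_empty, if_neg (fun h => hRS (by rw [h]))]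

end TA6

namespace TA6

theorem flagF_eq {α : Type*} [PartialOrder α] [BoundedOrder α]
    (rk : α → ℕ) (n : ℕ) (hg : IsGraded rk) (htop : rk ⊤ = n)
    {τ : α → α → α → Bool} (hτ : IsTripleAssignment τ)
    (T : Finset ℕ) (hT : T ⊆ Finset.Icc 1 (n - 1)) :
    flagF rk T = Nat.card {l : List α // SatChain (⊥ : α) ⊤ l ∧ descSet τ l ⊆ T} := by
  classical
  obtain ⟨hbot, hrk⟩ := hg
  have hT1 : ∀ t ∈ T, 1 ≤ t ∧ t ≤ n - 1 := fun t ht => Finset.mem_Icc.mp (hT ht)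
  have hlen : ∀ l : List α, SatChain (⊥ : α) ⊤ l → l.length = n + 1 := by
    intro l hl
    have := sat_length hrk hl
    rw [hbot, htop] at this
    omega
  have hrank : ∀ l : List α, SatChain (⊥ : α) ⊤ l → ∀ i, i < l.length →
      rk (l.getD i ⊥) = i := by
    intro l hl i hi
    have := sat_rank hrk hl ⊥ i hi
    rw [hbot] at this
    omega
  have hposu : ∀ l : List α, SatChain (⊥ : α) ⊤ l → ∀ w ∈ l, ∀ z ∈ l, rk w = rk z → w = z := by
    intro l hl w hw z hz hwz
    obtain ⟨i, hi, hiw⟩ := sat_mem hl ⊥ hw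
    obtain ⟨j, hj, hjz⟩ := sat_mem hl ⊥ hz
    rw [← hiw, ← hjz] at hwz ⊢
    rw [hrank l hl i hi, hrank l hl j hj] at hwz
    rw [hwz]
  -- canonical form of a chain with descents in T
  have hkey : ∀ l : List α, SatChain (⊥ : α) ⊤ l → descSet τ l ⊆ T →
      l = build hτ ⊤ ⊥ (l.filter (fun z => decide (rk z ∈ T))) := by
    intro l hl hd
    have hmemzs : ∀ w, w ∈ l.filter (fun z => decide (rk z ∈ T)) ↔ (w ∈ l ∧ rk w ∈ T) := by
      intro w; rw [List.mem_filter]; simp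
    refine build_unique hτ ⊤ ⊥ _ ⊥ l ?_ hl (fun w hw => ((hmemzs w).mp hw).1) ?_
    · refine List.Pairwise.isChain ?_
      rw [List.pairwise_cons]
      constructor
      · intro w hw
        obtain ⟨hwl, hwT⟩ := (hmemzs w).mp hw
        have h1 : 1 ≤ rk w := (hT1 _ hwT).1
        refine lt_of_le_of_ne (sat_mem_le hl hwl).1 (fun he => ?_)
        rw [← he, hbot] at h1
        omega
      · exact List.Pairwise.sublist (List.filter_sublist) (sat_pairwise hl)
    · intro p hp hmid
      have hmidl : l.getD (p + 1) ⊥ ∈ l := sat_getD_mem hl ⊥ (by omega)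
      have hmidT : rk (l.getD (p + 1) ⊥) ∉ T := fun hc => hmid ((hmemzs _).mpr ⟨hmidl, hc⟩)
      rw [hrank l hl (p + 1) (by omega)] at hmidT
      exact descSet_subset_iff.mp hd p hp hmidT
  -- the image of a chain satisfies the flag conditions
  have hwd : ∀ l : List α, SatChain (⊥ : α) ⊤ l → descSet τ l ⊆ T →
      IsChain (· ≤ ·) (↑(l.toFinset.filter (fun z => rk z ∈ T)) : Set α) ∧
        (l.toFinset.filter (fun z => rk z ∈ T)).image rk = T ∧
        (l.toFinset.filter (fun z => rk z ∈ T)).card = T.card ∧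
        ∀ x ∈ l.toFinset.filter (fun z => rk z ∈ T), ⊥ < x ∧ x < ⊤ := by
    intro l hl _
    have hlenl := hlen l hl
    have hmemc : ∀ w : α, w ∈ l.toFinset.filter (fun z => rk z ∈ T) ↔ (w ∈ l ∧ rk w ∈ T) := by
      intro w; rw [Finset.mem_filter, List.mem_toFinset]
    have himg : (l.toFinset.filter (fun z => rk z ∈ T)).image rk = T := by
      apply Finset.Subset.antisymm
      · intro t ht
        obtain ⟨w, hw, rfl⟩ := Finset.mem_image.mp ht
        exact ((hmemc w).mp hw).2
      · intro t ht
        have h1 := (hT1 t ht).1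
        have h2 := (hT1 t ht).2
        have htlen : t < l.length := by omega
        refine Finset.mem_image.mpr ⟨l.getD t ⊥, ?_, hrank l hl t htlen⟩
        rw [hmemc]
        exact ⟨sat_getD_mem hl ⊥ htlen, by rw [hrank l hl t htlen]; exact ht⟩
    refine ⟨?_, himg, ?_, ?_⟩
    · intro w hw z hz hne
      rw [Finset.mem_coe, hmemc] at hw hz
      obtain ⟨i, hi, hiw⟩ := sat_mem hl ⊥ hw.1
      obtain ⟨j, hj, hjz⟩ := sat_mem hl ⊥ hz.1
      rcases lt_trichotomy i j with h | h | h
      · left; rw [← hiw, ← hjz]; exact sat_le hl ⊥ h.le hj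
      · exact absurd (by rw [← hiw, ← hjz, h]) hne
      · right; rw [← hiw, ← hjz]; exact sat_le hl ⊥ h.le hi
    · conv_rhs => rw [← himg]
      exact (Finset.card_image_of_injOn (fun w hw z hz =>
        hposu l hl w ((hmemc w).mp hw).1 z ((hmemc z).mp hz).1)).symm
    · intro w hw
      obtain ⟨hwl, hwT⟩ := (hmemc w).mp hw
      have h1 := (hT1 _ hwT).1
      have h2 := (hT1 _ hwT).2
      constructor
      · refine lt_of_le_of_ne (sat_mem_le hl hwl).1 (fun he => ?_)
        rw [← he, hbot] at h1
        omega
      · refine lt_of_le_of_ne (sat_mem_le hl hwl).2 (fun he => ?_)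
        rw [he, htop] at h1 h2
        omega
  -- surjectivity construction
  have hsurj : ∀ c : Finset α, IsChain (· ≤ ·) (↑c : Set α) → c.image rk = T →
      c.card = T.card → (∀ x ∈ c, ⊥ < x ∧ x < ⊤) →
      ∃ l : List α, SatChain (⊥ : α) ⊤ l ∧ descSet τ l ⊆ T ∧
        l.toFinset.filter (fun z => rk z ∈ T) = c := by
    intro c hc himg _ hbt
    obtain ⟨zs, hzs, hzmem⟩ := exists_sorted_list c hc
    have hch : ((⊥ : α) :: zs).Chain' (· < ·) := by
      refine List.Pairwise.isChain ?_
      rw [List.pairwise_cons]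
      exact ⟨fun w hw => (hbt w ((hzmem w).mp hw)).1, hzs⟩
    have hle : ∀ w ∈ (⊥ : α) :: zs, w ≤ ⊤ := fun w _ => le_top
    have hl : SatChain (⊥ : α) ⊤ (build hτ ⊤ ⊥ zs) := build_sat hτ ⊤ zs ⊥ hch hle
    have hlenl := hlen _ hl
    have hmeml : ∀ w ∈ zs, w ∈ build hτ ⊤ ⊥ zs := build_mem hτ ⊤ zs ⊥ hch hle
    have hd : descSet τ (build hτ ⊤ ⊥ zs) ⊆ T := by
      refine descSet_subset_iff.mpr ?_
      intro p hp hpT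
      refine build_rising hτ ⊤ ⊥ zs ⊥ hch hle p hp ?_
      intro hmid
      have h1 : (build hτ ⊤ ⊥ zs).getD (p + 1) ⊥ ∈ c := (hzmem _).mp hmid
      have h2 : rk ((build hτ ⊤ ⊥ zs).getD (p + 1) ⊥) ∈ T := by
        rw [← himg]
        exact Finset.mem_image_of_mem rk h1
      rw [hrank _ hl (p + 1) (by omega)] at h2
      exact hpT h2
    refine ⟨build hτ ⊤ ⊥ zs, hl, hd, ?_⟩
    ext w
    rw [Finset.mem_filter, List.mem_toFinset]
    constructor
    · rintro ⟨hwl, hwT⟩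
      have h1 : rk w ∈ c.image rk := by rw [himg]; exact hwT
      obtain ⟨v, hv, hvw⟩ := Finset.mem_image.mp h1
      have hvl : v ∈ build hτ ⊤ ⊥ zs := hmeml v ((hzmem v).mpr hv)
      have := hposu _ hl v hvl w hwl hvw
      rw [← this]
      exact hv
    · intro hwc
      refine ⟨hmeml w ((hzmem w).mpr hwc), ?_⟩
      rw [← himg]
      exact Finset.mem_image_of_mem rk hwc
  unfold flagF
  refine (Nat.card_congr (Equiv.ofBijective
    (fun lp : {l : List α // SatChain (⊥ : α) ⊤ l ∧ descSet τ l ⊆ T} =>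
      (⟨lp.1.toFinset.filter (fun z => rk z ∈ T), hwd lp.1 lp.2.1 lp.2.2⟩ :
        {c : Finset α // IsChain (· ≤ ·) (↑c : Set α) ∧ c.image rk = T ∧ c.card = T.card ∧
          ∀ x ∈ c, ⊥ < x ∧ x < ⊤})) ⟨?_, ?_⟩)).symm
  · rintro ⟨l₁, h₁⟩ ⟨l₂, h₂⟩ he
    simp only [Subtype.mk.injEq] at he ⊢
    have k₁ := hkey l₁ h₁.1 h₁.2
    have k₂ := hkey l₂ h₂.1 h₂.2
    have hfeq : l₁.filter (fun z => decide (rk z ∈ T)) =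
        l₂.filter (fun z => decide (rk z ∈ T)) := by
      refine pairwise_eq_of_mem _ _ ?_ ?_ ?_
      · exact List.Pairwise.sublist (List.filter_sublist) (sat_pairwise h₁.1)
      · exact List.Pairwise.sublist (List.filter_sublist) (sat_pairwise h₂.1)
      · intro a
        have e := Finset.ext_iff.mp he a
        rw [Finset.mem_filter, Finset.mem_filter, List.mem_toFinset, List.mem_toFinset] at e
        rw [List.mem_filter, List.mem_filter]
        simpa using e
    rw [k₁, k₂, hfeq]
  · rintro ⟨c, hc1, hc2, hc3, hc4⟩
    obtain ⟨l, hl, hd, hfc⟩ := hsurj c hc1 hc2 hc3 hc4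
    exact ⟨⟨l, hl, hd⟩, Subtype.ext hfc⟩

end TA6
/-- For a graded poset `P` with a triple assignment `τ`, the flag `h`-vector
entry `h_S` equals the number of maximal chains whose descent set equals `S`. -/
theorem flagH_eq_card_descents {α : Type*} [PartialOrder α] [BoundedOrder α] [Finite α]
    (rk : α → ℕ) (n : ℕ) (hg : IsGraded rk) (htop : rk ⊤ = n)
    (τ : α → α → α → Bool) (hτ : IsTripleAssignment τ)
    (S : Finset ℕ) (hS : S ⊆ Finset.Icc 1 (n - 1)) :
    (Nat.card {l : List α // SatChain (⊥ : α) ⊤ l ∧ descSet τ l = S} : ℤ) =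
      flagH rk S := by
  classical
  have hlen : ∀ l : List α, SatChain (⊥ : α) ⊤ l → l.length = n + 1 := by
    intro l hl
    have := TA6.sat_length hg.2 hl
    rw [hg.1, htop] at this
    omega
  haveI : Finite {l : List α // SatChain (⊥ : α) ⊤ l} := by
    refine Finite.of_injective (fun m : {l : List α // SatChain (⊥ : α) ⊤ l} =>
      (fun i : Fin (n + 1) => m.1.getD i ⊥)) ?_
    rintro ⟨l₁, h₁⟩ ⟨l₂, h₂⟩ h
    simp only [Subtype.mk.injEq]
    refine List.ext_getElem (by rw [hlen _ h₁, hlen _ h₂]) ?_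
    intro i hi1 hi2
    have := congrFun h ⟨i, by rw [hlen _ h₁] at hi1; exact hi1⟩
    simp only at this
    rwa [List.getD_eq_getElem _ _ hi1, List.getD_eq_getElem _ _ hi2] at this
  letI : Fintype {l : List α // SatChain (⊥ : α) ⊤ l} := Fintype.ofFinite _
  have hcard : ∀ Q : List α → Prop, Nat.card {l : List α // SatChain (⊥ : α) ⊤ l ∧ Q l} =
      (Finset.univ.filter
        (fun m : {l : List α // SatChain (⊥ : α) ⊤ l} => Q m.1)).card := by
    intro Q
    have e : {l : List α // SatChain (⊥ : α) ⊤ l ∧ Q l} ≃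
        {m : {l : List α // SatChain (⊥ : α) ⊤ l} // Q m.1} :=
      ⟨fun x => ⟨⟨x.1, x.2.1⟩, x.2.2⟩, fun x => ⟨x.1.1, x.1.2, x.2⟩,
        fun _ => rfl, fun _ => rfl⟩
    rw [Nat.card_congr e, Nat.card_eq_fintype_card, Fintype.card_subtype]
  rw [hcard (fun l => descSet τ l = S)]
  unfold flagH
  have step1 : ∀ T ∈ S.powerset, (-1 : ℤ) ^ (S.card - T.card) * (flagF rk T : ℤ) =
      ∑ m : {l : List α // SatChain (⊥ : α) ⊤ l},
        (-1 : ℤ) ^ (S.card - T.card) * (if descSet τ m.1 ⊆ T then 1 else 0) := by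
    intro T hTp
    rw [TA6.flagF_eq rk n hg htop hτ T ((Finset.mem_powerset.mp hTp).trans hS),
      hcard (fun l => descSet τ l ⊆ T), Finset.card_filter]
    push_cast
    rw [Finset.mul_sum]
  rw [Finset.sum_congr rfl step1, Finset.sum_comm]
  rw [Finset.sum_congr rfl (fun m _ => TA6.moebius S (descSet τ m.1))]
  rw [Finset.card_filter]
  push_cast
  rfl
end

section
/- Let n ≥ 2 and let τ: W(T_n) → {a,b} be such that every interval of rank at most 3 in the butterfly poset T_n has a unique rising maximal chain. Then T_n contains a breakpoint, i.e., an element y with 0̂ < y < 1̂ such that the value τ(x, y, z) is the same for all x ⋖ y ⋖ z. -/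
open Finset

section ButtAux
variable {n : ℕ}

lemma Butt.lt_iff {x y : Butt n} : x < y ↔ x.rk < y.rk := by
  rw [lt_iff_le_not_ge]
  show (x = y ∨ x.rk < y.rk) ∧ ¬(y = x ∨ y.rk < x.rk) ↔ _
  constructor
  · rintro ⟨h1 | h1, h2⟩
    · subst h1; exact absurd (Or.inl rfl) h2
    · exact h1
  · intro h
    refine ⟨Or.inr h, ?_⟩
    rintro (rfl | h2) <;> omega

lemma Butt.covBy_iff {x y : Butt n} : x ⋖ y ↔ y.rk = x.rk + 1 := by
  constructor
  · rintro ⟨hlt, hmid⟩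
    rw [Butt.lt_iff] at hlt
    by_contra h
    have hle : x.rk + 1 ≤ n := by have := y.hle; omega
    have hz1 : x < (⟨x.rk + 1, false, hle, fun _ => rfl⟩ : Butt n) :=
      Butt.lt_iff.mpr (Nat.lt_succ_self _)
    have hz2 : (⟨x.rk + 1, false, hle, fun _ => rfl⟩ : Butt n) < y :=
      Butt.lt_iff.mpr (show x.rk + 1 < y.rk by omega)
    exact hmid hz1 hz2
  · intro h
    refine ⟨Butt.lt_iff.mpr (by omega), fun z hz1 hz2 => ?_⟩
    rw [Butt.lt_iff] at hz1 hz2; omega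

lemma Butt.bot_rk : (⊥ : Butt n).rk = 0 := rfl
lemma Butt.top_rk : (⊤ : Butt n).rk = n := rfl

lemma Butt.eq_bot {y : Butt n} (h : y.rk = 0) : y = ⊥ :=
  Butt.ext' h (y.hb (Or.inl h))

lemma Butt.eq_top {y : Butt n} (h : y.rk = n) : y = ⊤ :=
  Butt.ext' h (y.hb (Or.inr h))

/-- The canonical element of a given rank (side `false`). -/
def Butt.mk' (i : ℕ) (h : i ≤ n) : Butt n := ⟨i, false, h, fun _ => rfl⟩

lemma Butt.eq_or_eq {y y' y'' : Butt n} (h : y.rk = y'.rk) (h2 : y''.rk = y.rk)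
    (hne : y ≠ y') : y'' = y ∨ y'' = y' := by
  by_cases hs : y''.side = y.side
  · exact Or.inl (Butt.ext' h2 hs)
  · refine Or.inr (Butt.ext' (h2.trans h) ?_)
    have hys : y.side ≠ y'.side := fun hh => hne (Butt.ext' h hh)
    cases hy : y.side <;> cases hy' : y'.side <;> cases hy'' : y''.side <;> simp_all

lemma satchain_rank {x z : Butt n} {l : List (Butt n)} (h : SatChain x z l) :
    x.rk + l.length = z.rk + 1 := by
  obtain ⟨hc, hh, hl⟩ := h
  induction l generalizing x with
  | nil => simp at hh
  | cons a t ih =>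
    simp only [List.head?_cons, Option.some.injEq] at hh
    subst hh
    cases t with
    | nil => simp only [List.getLast?_singleton, Option.some.injEq] at hl; subst hl; simp
    | cons b t' =>
      unfold List.Chain' at hc; rw [List.isChain_cons_cons] at hc
      rw [List.getLast?_cons_cons] at hl
      have := ih hc.2 rfl hl
      have hcov := Butt.covBy_iff.mp hc.1
      simp only [List.length_cons] at this ⊢
      omega

lemma satchain_three {x z : Butt n} {l : List (Butt n)} (h2 : z.rk = x.rk + 2)
    (h : SatChain x z l) : ∃ y, l = [x, y, z] ∧ x ⋖ y ∧ y ⋖ z := by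
  have hlen := satchain_rank h
  rw [h2] at hlen
  have hl3 : l.length = 3 := by omega
  obtain ⟨a, b, c, rfl⟩ := List.length_eq_three.mp hl3
  obtain ⟨hc, hh, hl⟩ := h
  simp only [List.head?_cons, Option.some.injEq] at hh
  have hlast : c = z := by simpa using hl
  subst hh; subst hlast
  unfold List.Chain' at hc; rw [List.isChain_cons_cons, List.isChain_cons_cons] at hc
  exact ⟨b, rfl, hc.1, hc.2.1⟩

lemma satchain_four {x z : Butt n} {l : List (Butt n)} (h2 : z.rk = x.rk + 3)
    (h : SatChain x z l) :
    ∃ y w, l = [x, y, w, z] ∧ x ⋖ y ∧ y ⋖ w ∧ w ⋖ z := by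
  have hlen := satchain_rank h
  rw [h2] at hlen
  have hl4 : l.length = 4 := by omega
  obtain ⟨a, t, rfl⟩ : ∃ a t, l = a :: t := by
    cases l with
    | nil => simp at hl4
    | cons a t => exact ⟨a, t, rfl⟩
  have ht3 : t.length = 3 := by simpa using hl4
  obtain ⟨b, c, d, rfl⟩ := List.length_eq_three.mp ht3
  obtain ⟨hc, hh, hl⟩ := h
  simp only [List.head?_cons, Option.some.injEq] at hh
  have hlast : d = z := by simpa using hl
  subst hh; subst hlast
  unfold List.Chain' at hc; rw [List.isChain_cons_cons, List.isChain_cons_cons, List.isChain_cons_cons] at hc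
  exact ⟨b, c, rfl, hc.1, hc.2.1, hc.2.2.1⟩

lemma satchain_mk3 {x y z : Butt n} (h1 : x ⋖ y) (h2 : y ⋖ z) :
    SatChain x z [x, y, z] := by
  refine ⟨?_, rfl, rfl⟩
  unfold List.Chain'; rw [List.isChain_cons_cons, List.isChain_cons_cons]
  exact ⟨h1, h2, by simp⟩

lemma satchain_mk4 {x y w z : Butt n} (h1 : x ⋖ y) (h2 : y ⋖ w) (h3 : w ⋖ z) :
    SatChain x z [x, y, w, z] := by
  refine ⟨?_, rfl, rfl⟩
  unfold List.Chain'; rw [List.isChain_cons_cons, List.isChain_cons_cons, List.isChain_cons_cons]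
  exact ⟨h1, h2, h3, by simp⟩

lemma risingOn_three {τ : Butt n → Butt n → Butt n → Bool} {x y z : Butt n} :
    RisingOn τ [x, y, z] ↔ τ x y z = true := by
  constructor
  · intro h; simpa using h 0 (by simp)
  · intro h i hi
    simp only [List.length_cons, List.length_nil] at hi
    have : i = 0 := by omega
    subst this
    simpa using h

lemma risingOn_four {τ : Butt n → Butt n → Butt n → Bool} {x y w z : Butt n} :
    RisingOn τ [x, y, w, z] ↔ τ x y w = true ∧ τ y w z = true := by
  constructor
  · intro h; exact ⟨by simpa using h 0 (by simp), by simpa using h 1 (by simp)⟩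
  · rintro ⟨h1, h2⟩ i hi
    simp only [List.length_cons, List.length_nil] at hi
    rcases i with _ | _ | i
    · simpa using h1
    · simpa using h2
    · exact absurd hi (by omega)

lemma butt_rank2 {τ : Butt n → Butt n → Butt n → Bool}
    (h3 : ∀ x y : Butt n, x < y → y.rk - x.rk ≤ 3 →
      ∃! l : List (Butt n), SatChain x y l ∧ RisingOn τ l)
    {x z : Butt n} (hx : x < z) (h2 : z.rk = x.rk + 2) :
    ∃! y : Butt n, x ⋖ y ∧ y ⋖ z ∧ τ x y z = true := by
  obtain ⟨l, ⟨hsat, hris⟩, huniq⟩ := h3 x z hx (by omega)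
  obtain ⟨y, rfl, hxy, hyz⟩ := satchain_three h2 hsat
  refine ⟨y, ⟨hxy, hyz, risingOn_three.mp hris⟩, ?_⟩
  rintro y' ⟨hxy', hy'z, ht⟩
  have := huniq [x, y', z] ⟨satchain_mk3 hxy' hy'z, risingOn_three.mpr ht⟩
  simpa using this

lemma butt_rank3 {τ : Butt n → Butt n → Butt n → Bool}
    (h3 : ∀ x y : Butt n, x < y → y.rk - x.rk ≤ 3 →
      ∃! l : List (Butt n), SatChain x y l ∧ RisingOn τ l)
    {x w : Butt n} (hx : x < w) (h2 : w.rk = x.rk + 3) :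
    ∃! p : Butt n × Butt n, (x ⋖ p.1 ∧ p.1 ⋖ p.2 ∧ p.2 ⋖ w) ∧
      τ x p.1 p.2 = true ∧ τ p.1 p.2 w = true := by
  obtain ⟨l, ⟨hsat, hris⟩, huniq⟩ := h3 x w hx (by omega)
  obtain ⟨y, z, rfl, hxy, hyz, hzw⟩ := satchain_four h2 hsat
  obtain ⟨r1, r2⟩ := risingOn_four.mp hris
  refine ⟨(y, z), ⟨⟨hxy, hyz, hzw⟩, r1, r2⟩, ?_⟩
  rintro ⟨y', z'⟩ ⟨⟨hxy', hy'z', hz'w⟩, t1, t2⟩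
  have := huniq [x, y', z', w] ⟨satchain_mk4 hxy' hy'z' hz'w, risingOn_four.mpr ⟨t1, t2⟩⟩
  simp at this
  simp [this.1, this.2]

end ButtAux

/-- If every interval of rank at most 3 of the butterfly poset `T_n`
(`n ≥ 2`) has a unique rising maximal chain for `τ`, then `T_n` contains a breakpoint. -/
theorem butterfly_exists_breakpoint (n : ℕ) (hn : 2 ≤ n)
    (τ : Butt n → Butt n → Butt n → Bool)
    (h3 : ∀ x y : Butt n, x < y → y.rk - x.rk ≤ 3 →
      ∃! l : List (Butt n), SatChain x y l ∧ RisingOn τ l) :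
    ∃ y : Butt n, ⊥ < y ∧ y < ⊤ ∧ IsBreakpoint τ y := by
  by_contra hcon
  push_neg at hcon
  have noBP : ∀ y : Butt n, 0 < y.rk → y.rk < n → ¬ IsBreakpoint τ y := by
    intro y h1 h2 hbp
    exact hcon y (Butt.lt_iff.mpr (by rw [Butt.bot_rk]; exact h1))
      (Butt.lt_iff.mpr (by rw [Butt.top_rk]; exact h2)) hbp
  have mkBP : ∀ y0 : Butt n, 0 < y0.rk → y0.rk < n →
      (∀ p q : Butt n, p ⋖ y0 → y0 ⋖ q → τ p y0 q = true) → False := by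
    intro y0 h1 h2 hconst
    exact noBP y0 h1 h2 ⟨true, hconst⟩
  have key : ∀ j, 1 ≤ j → j ≤ n - 1 →
      ∀ x x' m m' w : Butt n, m.rk = j → x ⋖ m → m ⋖ w → x' ⋖ m' → m' ⋖ w →
        τ x m w = true → τ x' m' w = true → m = m' := by
    intro j hj
    induction j, hj using Nat.le_induction with
    | base =>
      intro _ x x' m m' w hm hxm hmw hx'm' hm'w ht ht'
      have h1 := Butt.covBy_iff.mp hxm
      have h2 := Butt.covBy_iff.mp hmw
      have h3' := Butt.covBy_iff.mp hx'm'
      have h4 := Butt.covBy_iff.mp hm'w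
      have hx0 : x = ⊥ := Butt.eq_bot (by omega)
      have hx'0 : x' = ⊥ := Butt.eq_bot (by omega)
      subst hx0; subst hx'0
      obtain ⟨y, _, hu⟩ := butt_rank2 h3 (Butt.lt_iff.mpr (by omega))
        (show w.rk = (⊥ : Butt n).rk + 2 by omega)
      rw [hu m ⟨hxm, hmw, ht⟩, hu m' ⟨hx'm', hm'w, ht'⟩]
    | succ k hk ih =>
      intro hle x x' m m' w hm hxm hmw hx'm' hm'w ht ht'
      have hrx := Butt.covBy_iff.mp hxm
      have hrw := Butt.covBy_iff.mp hmw
      have hrx' := Butt.covBy_iff.mp hx'm'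
      have hrw' := Butt.covBy_iff.mp hm'w
      by_cases hxx : x = x'
      · subst hxx
        obtain ⟨y, _, hu⟩ := butt_rank2 h3 (Butt.lt_iff.mpr (by omega))
          (show w.rk = x.rk + 2 by omega)
        rw [hu m ⟨hxm, hmw, ht⟩, hu m' ⟨hx'm', hm'w, ht'⟩]
      · by_contra hmm'
        set a : Butt n := Butt.mk' (k - 1) (by omega) with ha
        have har : a.rk = k - 1 := rfl
        obtain ⟨y1, ⟨ha1, hb1, hc1⟩, hu1⟩ := butt_rank2 h3
          (Butt.lt_iff.mpr (by omega)) (show m.rk = a.rk + 2 by omega)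
        obtain ⟨y2, ⟨ha2, hb2, hc2⟩, hu2⟩ := butt_rank2 h3
          (Butt.lt_iff.mpr (show a.rk < m'.rk by omega))
          (show m'.rk = a.rk + 2 by omega)
        have hry1 := Butt.covBy_iff.mp ha1
        have hry2 := Butt.covBy_iff.mp ha2
        by_cases hy12 : y1 = y2
        · -- sel at rank k is constant: breakpoint at y1
          apply mkBP y1 (by omega) (by omega)
          intro p q hp hq
          have hrp := Butt.covBy_iff.mp hp
          have hrq := Butt.covBy_iff.mp hq
          obtain ⟨ys, ⟨hp1, hp2, hp3⟩, _⟩ := butt_rank2 h3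
            (Butt.lt_iff.mpr (by omega)) (show q.rk = p.rk + 2 by omega)
          have hrys := Butt.covBy_iff.mp hp1
          rcases Butt.eq_or_eq (show m.rk = m'.rk by omega)
              (show q.rk = m.rk by omega) hmm' with hqm | hqm
          · subst hqm
            have := ih (by omega) p a ys y1 q (by omega) hp1 hp2 ha1 hb1 hp3 hc1
            rwa [this] at hp3
          · subst hqm
            have := ih (by omega) p a ys y2 q (by omega) hp1 hp2 ha2 hb2 hp3 hc2
            rw [this, ← hy12] at hp3
            exact hp3
        · -- y1 ≠ y2 : use rank-3 uniqueness on [a, w]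
          obtain ⟨⟨y, z⟩, ⟨⟨hay, hyz, hzw⟩, t1, t2⟩, hu3⟩ := butt_rank3 h3
            (Butt.lt_iff.mpr (by omega)) (show w.rk = a.rk + 3 by omega)
          dsimp only at hay hyz hzw t1 t2
          have hxy12 : x = y1 ∨ x = y2 :=
            Butt.eq_or_eq (show y1.rk = y2.rk by omega) (show x.rk = y1.rk by omega) hy12
          have hx'y12 : x' = y1 ∨ x' = y2 :=
            Butt.eq_or_eq (show y1.rk = y2.rk by omega) (show x'.rk = y1.rk by omega) hy12
          have hrz : z.rk = a.rk + 2 := by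
            have := Butt.covBy_iff.mp hay
            have := Butt.covBy_iff.mp hyz
            omega
          have hzmm : z = m ∨ z = m' :=
            Butt.eq_or_eq (show m.rk = m'.rk by omega) (show z.rk = m.rk by omega) hmm'
          rcases hxy12 with hxe | hxe <;> rcases hx'y12 with hx'e | hx'e
          · exact hxx (hxe.trans hx'e.symm)
          · -- x = y1, x' = y2 : two distinct rising chains in [a, w]
            have e1 := hu3 (x, m) ⟨⟨hxe ▸ ha1, hxm, hmw⟩, by rw [hxe]; exact hc1, ht⟩
            have e2 := hu3 (x', m') ⟨⟨hx'e ▸ ha2, hx'm', hm'w⟩, by rw [hx'e]; exact hc2, ht'⟩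
            apply hmm'
            have : (x, m) = (x', m') := e1.trans e2.symm
            exact (Prod.mk.injEq .. ▸ this).2
          · -- x = y2, x' = y1 : no rising chain in [a, w]
            rcases hzmm with hze | hze
            · subst hze
              have hyy1 : y = y1 := hu1 y ⟨hay, hyz, t1⟩
              have : τ x' z w = true := by rw [hx'e, ← hyy1]; exact t2
              obtain ⟨yy, _, huw⟩ := butt_rank2 h3
                (Butt.lt_iff.mpr (show x'.rk < w.rk by omega))
                (show w.rk = x'.rk + 2 by omega)
              exact hmm' ((huw z ⟨hx'e ▸ (hyy1 ▸ hyz : y1 ⋖ z), hzw, this⟩).trans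
                (huw m' ⟨hx'm', hm'w, ht'⟩).symm)
            · subst hze
              have hyy2 : y = y2 := hu2 y ⟨hay, hyz, t1⟩
              have : τ x z w = true := by rw [hxe, ← hyy2]; exact t2
              obtain ⟨yy, _, huw⟩ := butt_rank2 h3
                (Butt.lt_iff.mpr (show x.rk < w.rk by omega))
                (show w.rk = x.rk + 2 by omega)
              exact hmm' (((huw z ⟨hxe ▸ (hyy2 ▸ hyz : y2 ⋖ z), hzw, this⟩).trans
                (huw m ⟨hxm, hmw, ht⟩).symm).symm)
          · exact hxx (hxe.trans hx'e.symm)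
  -- apply at rank n - 1 with top element ⊤
  have hfin := key (n - 1) (by omega) (le_refl _)
  set a : Butt n := Butt.mk' (n - 2) (by omega) with ha
  have har : a.rk = n - 2 := rfl
  obtain ⟨y0, ⟨ha0, hb0, hc0⟩, _⟩ := butt_rank2 h3
    (Butt.lt_iff.mpr (show a.rk < (⊤ : Butt n).rk by rw [Butt.top_rk]; omega))
    (show (⊤ : Butt n).rk = a.rk + 2 by rw [Butt.top_rk]; omega)
  have hry0 : y0.rk = n - 1 := by have := Butt.covBy_iff.mp ha0; omega
  apply mkBP y0 (by omega) (by omega)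
  intro p q hp hq
  have hrp := Butt.covBy_iff.mp hp
  have hrq := Butt.covBy_iff.mp hq
  have hq' : q = ⊤ := Butt.eq_top (by omega)
  subst hq'
  obtain ⟨ys, ⟨hp1, hp2, hp3⟩, _⟩ := butt_rank2 h3
    (Butt.lt_iff.mpr (show p.rk < (⊤ : Butt n).rk by rw [Butt.top_rk]; omega))
    (show (⊤ : Butt n).rk = p.rk + 2 by rw [Butt.top_rk]; omega)
  have hrys := Butt.covBy_iff.mp hp1
  have := hfin p a ys y0 ⊤ (by omega) hp1 hp2 ha0 hb0 hp3 hc0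
  rwa [this] at hp3
end

section
/- If y is a breakpoint for a function τ: W(T_n) → {a,b} on the butterfly poset, then the other element ȳ of the same rank is also a breakpoint, provided every length-2 interval has a unique rising chain. -/
open Finset

section Aux

variable {n : ℕ}

lemma Butt.lt_iff_s9 {a b : Butt n} : a < b ↔ a.rk < b.rk := by
  constructor
  · intro h
    rcases lt_iff_le_not_ge.mp h with ⟨h1, h2⟩
    rcases h1 with rfl | h1
    · exact absurd le_rfl h2
    · exact h1
  · intro h
    exact lt_of_le_of_ne (Or.inr h) (by rintro rfl; omega)

lemma Butt.covBy_iff_s9 {a b : Butt n} : a ⋖ b ↔ a.rk + 1 = b.rk := by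
  constructor
  · rintro ⟨hab, hmid⟩
    have h1 : a.rk < b.rk := Butt.lt_iff_s9.mp hab
    by_contra h
    have h2 : a.rk + 1 < b.rk := by omega
    have hle : a.rk + 1 ≤ n := by have := b.hle; omega
    exact hmid (c := ⟨a.rk + 1, false, hle, fun _ => rfl⟩)
      (Butt.lt_iff_s9.mpr (Nat.lt_succ_self _)) (Butt.lt_iff_s9.mpr h2)
  · intro h
    exact ⟨Butt.lt_iff_s9.mpr (by omega), fun c hac hcb => by
      have := Butt.lt_iff_s9.mp hac; have := Butt.lt_iff_s9.mp hcb; omega⟩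

lemma Butt.chain_rank : ∀ (l : List (Butt n)) (h : l ≠ []),
    l.Chain' (· ⋖ ·) → (l.getLast h).rk + 1 = (l.head h).rk + l.length
  | [], h, _ => absurd rfl h
  | [a], _, _ => by simp
  | a :: b :: t, _, hc => by
    unfold List.Chain' at hc; rw [List.isChain_cons_cons] at hc
    have ih := Butt.chain_rank (b :: t) (by simp) hc.2
    have hab : a.rk + 1 = b.rk := Butt.covBy_iff_s9.mp hc.1
    rw [List.getLast_cons (by simp), List.head_cons]
    simp only [List.head_cons, List.length_cons] at ih ⊢
    omega

lemma Butt.satchain_two {x z : Butt n} (hz : z.rk = x.rk + 2) {l : List (Butt n)}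
    (h : SatChain x z l) : ∃ m, x ⋖ m ∧ m ⋖ z ∧ l = [x, m, z] := by
  obtain ⟨hc, hh, hl⟩ := h
  have hne : l ≠ [] := by rintro rfl; simp at hh
  have hhd : l.head hne = x := by
    rw [List.head?_eq_head hne] at hh; exact Option.some.inj hh
  have hlast : l.getLast hne = z := by
    rw [List.getLast?_eq_getLast hne] at hl; exact Option.some.inj hl
  have hrk := Butt.chain_rank l hne hc
  rw [hhd, hlast] at hrk
  have hlen : l.length = 3 := by omega
  match l, hlen with
  | [a, m, c], _ =>
    simp only [List.head_cons] at hhd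
    have hlc : c = z := by simpa [List.getLast] using hlast
    subst hhd hlc
    unfold List.Chain' at hc; rw [List.isChain_cons_cons, List.isChain_cons_cons] at hc
    exact ⟨m, hc.1, hc.2.1, rfl⟩

lemma risingOn_triple {α : Type*} [PartialOrder α] (τ : α → α → α → Bool)
    (a b c : α) : RisingOn τ [a, b, c] ↔ τ a b c = true := by
  constructor
  · intro h
    have := h 0 (by norm_num)
    simpa using this
  · intro h i hi
    simp only [List.length_cons, List.length_nil] at hi
    have : i = 0 := by omega
    subst this
    simpa using h

lemma satChain_triple {α : Type*} [PartialOrder α] {a b c : α}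
    (h1 : a ⋖ b) (h2 : b ⋖ c) : SatChain a c [a, b, c] := by
  refine ⟨?_, rfl, rfl⟩
  unfold List.Chain'; rw [List.isChain_cons_cons, List.isChain_cons_cons]
  exact ⟨h1, h2, List.isChain_singleton c⟩

end Aux
/-- If `y` is a breakpoint for `τ` on the butterfly poset, and every
length-2 interval has a unique rising chain, then the other element `ȳ` of the same
rank is also a breakpoint. -/
theorem butterfly_breakpoint_bar (n : ℕ) (τ : Butt n → Butt n → Butt n → Bool)
    (h2 : ∀ x z : Butt n, x < z → z.rk - x.rk = 2 →
      ∃! l : List (Butt n), SatChain x z l ∧ RisingOn τ l)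
    (y ybar : Butt n) (h0 : ⊥ < y) (h1 : y < ⊤)
    (hr : ybar.rk = y.rk) (hne : ybar ≠ y) (hbp : IsBreakpoint τ y) :
    IsBreakpoint τ ybar := by
  obtain ⟨v, hv⟩ := hbp
  refine ⟨!v, fun x z hx hz => ?_⟩
  have hxr : x.rk + 1 = ybar.rk := Butt.covBy_iff_s9.mp hx
  have hzr : ybar.rk + 1 = z.rk := Butt.covBy_iff_s9.mp hz
  have hxy : x ⋖ y := Butt.covBy_iff_s9.mpr (by omega)
  have hyz : y ⋖ z := Butt.covBy_iff_s9.mpr (by omega)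
  have hxz : x < z := Butt.lt_iff_s9.mpr (by omega)
  have hrk2 : z.rk - x.rk = 2 := by omega
  obtain ⟨l, ⟨hl, hlr⟩, huniq⟩ := h2 x z hxz hrk2
  have hc1 : SatChain x z [x, y, z] := satChain_triple hxy hyz
  have hc2 : SatChain x z [x, ybar, z] := satChain_triple hx hz
  have hvy : τ x y z = v := hv x z hxy hyz
  cases hb : τ x ybar z with
  | true =>
    cases hvv : v with
    | true =>
      -- both chains rising, contradicting uniqueness
      have e1 : [x, y, z] = l := huniq _ ⟨hc1, (risingOn_triple τ x y z).mpr (by rw [hvy, hvv])⟩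
      have e2 : [x, ybar, z] = l := huniq _ ⟨hc2, (risingOn_triple τ x ybar z).mpr hb⟩
      have : y = ybar := by simpa using e1.trans e2.symm
      exact absurd this.symm hne
    | false => rfl
  | false =>
    cases hvv : v with
    | true => rfl
    | false =>
      -- the unique rising chain must be [x,m,z] with m = y or m = ybar, contradiction
      exfalso
      obtain ⟨m, hm1, hm2, rfl⟩ := Butt.satchain_two (by omega) hl
      have hmr : m.rk = y.rk := by
        have := Butt.covBy_iff_s9.mp hm1; omega
      have hmem : m = y ∨ m = ybar := by
        by_cases hs : m.side = y.side
        · exact Or.inl (Butt.ext' hmr hs)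
        · refine Or.inr (Butt.ext' (by omega) ?_)
          have hys : ybar.side ≠ y.side := by
            intro h; exact hne (Butt.ext' hr h)
          cases my : m.side <;> cases yy : y.side <;> cases by' : ybar.side <;>
            simp_all
      have hrise : τ x m z = true := (risingOn_triple τ x m z).mp hlr
      rcases hmem with rfl | rfl
      · rw [hvy, hvv] at hrise; exact absurd hrise (by simp)
      · rw [hb] at hrise; exact absurd hrise (by simp)
end
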